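/- arXiv:1011.3441 — 7 statements merged into one kernel-verified Lean document; each statement's English description precedes it below -/
import Mathlib

section
/- For any finite set X of strings over an alphabet and any two strings x, y in X, the prefix-lexicographic rank of y among X lies in the interval [prrank_X(x), prrank_X(x) + prcount_X(x) - 1] if and only if x is a prefix of y, where prrank_X(x) is the number of elements of X strictly preceding x in prefix-lexicographic order and prcount_X(x) is the number of elements of X having x as a prefix. -/
/-- Number of elements of `X` strictly preceding `x` in prefix-lexicographic order. -/
noncomputable def prrank {α : Type*} [LinearOrder α] (X : Set (List α)) (x : List α) : ℕ :=
  {t ∈ X | List.Lex (· < ·) t x}.ncard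

/-- Number of elements of `X` having `x` as a prefix. -/
noncomputable def prcount {α : Type*} [LinearOrder α] (X : Set (List α)) (x : List α) : ℕ :=
  {t ∈ X | x <+: t}.ncard

private lemma not_lex_of_prefix {α : Type*} [LinearOrder α] {x t : List α} (h : x <+: t) :
    ¬ List.Lex (· < ·) t x := by
  obtain ⟨s, rfl⟩ := h
  induction x with
  | nil => exact List.not_lex_nil
  | cons a x ih =>
    intro hl
    cases hl with
    | cons h => exact ih h
    | rel h => exact lt_irrefl _ h

private lemma lex_of_prefix_of_lex {α : Type*} [LinearOrder α] :
    ∀ {x y t : List α}, List.Lex (· < ·) x y → ¬ x <+: y → x <+: t → List.Lex (· < ·) t y := by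
  intro x y t hxy
  induction hxy generalizing t with
  | nil => intro h; exact absurd (List.nil_prefix) h
  | @cons a l₁ l₂ h ih =>
    intro hnp hpt
    obtain ⟨s, rfl⟩ := hpt
    exact List.Lex.cons (ih (fun hp => hnp (List.cons_prefix_cons.mpr ⟨rfl, hp⟩)) ⟨s, rfl⟩)
  | @rel a₁ l₁ a₂ l₂ h =>
    intro _ hpt
    obtain ⟨s, rfl⟩ := hpt
    exact List.Lex.rel h

theorem prefix_rank_interval {α : Type*} [LinearOrder α] (X : Set (List α)) (hX : X.Finite)
    (x y : List α) (hx : x ∈ X) (hy : y ∈ X) :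
    (prrank X x ≤ prrank X y ∧ prrank X y ≤ prrank X x + prcount X x - 1) ↔ x <+: y := by
  have hA : ∀ z : List α, {t ∈ X | List.Lex (· < ·) t z}.Finite :=
    fun z => hX.subset (fun t ht => ht.1)
  have hB : {t ∈ X | x <+: t}.Finite := hX.subset (fun t ht => ht.1)
  have hcount_pos : 1 ≤ prcount X x :=
    (Set.ncard_pos hB).mpr ⟨x, hx, List.prefix_refl x⟩
  haveI : IsTrichotomous (List α) (List.Lex (· < ·)) :=
    List.Lex.trichotomous _
  haveI : IsAsymm (List α) (List.Lex (· < ·)) := List.Lex.asymm _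
  constructor
  · rintro ⟨h1, h2⟩
    by_contra hnp
    rcases trichotomous_of (List.Lex (· < ·)) y x with hyx | heq | hxy
    · -- y < x lex : then prrank y < prrank x
      have hlt : prrank X y < prrank X x := by
        apply Set.ncard_lt_ncard _ (hA x)
        constructor
        · intro t ht
          exact ⟨ht.1, List.lex_trans lt_trans ht.2 hyx⟩
        · intro hsub
          exact not_lex_of_prefix (List.prefix_refl y) ((hsub ⟨hy, hyx⟩).2)
      omega
    · exact hnp (heq ▸ List.prefix_refl x)
    · -- x < y lex, x not prefix of y : prrank x + prcount x ≤ prrank y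
      have hsub : {t ∈ X | List.Lex (· < ·) t x} ∪ {t ∈ X | x <+: t} ⊆
          {t ∈ X | List.Lex (· < ·) t y} := by
        rintro t (⟨htX, htx⟩ | ⟨htX, htp⟩)
        · exact ⟨htX, List.lex_trans lt_trans htx hxy⟩
        · exact ⟨htX, lex_of_prefix_of_lex hxy hnp htp⟩
      have hdisj : Disjoint {t ∈ X | List.Lex (· < ·) t x} {t ∈ X | x <+: t} := by
        rw [Set.disjoint_left]
        rintro t ⟨_, htx⟩ ⟨_, htp⟩
        exact not_lex_of_prefix htp htx
      have := Set.ncard_union_eq hdisj (hA x) hB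
      have hle : prrank X x + prcount X x ≤ prrank X y := by
        rw [prrank, prrank, prcount, ← this]
        exact Set.ncard_le_ncard hsub (hA y)
      omega
  · intro hp
    constructor
    · -- monotonicity
      apply Set.ncard_le_ncard _ (hA y)
      rintro t ⟨htX, htx⟩
      rcases List.prefix_iff_eq_append.mp hp ▸ hp with _
      refine ⟨htX, ?_⟩
      rcases hp with ⟨s, rfl⟩
      exact List.Lex.append_right _ s htx
    · -- upper bound
      have hsub : {t ∈ X | List.Lex (· < ·) t y} ⊆
          {t ∈ X | List.Lex (· < ·) t x} ∪ ({t ∈ X | x <+: t} \ {y}) := by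
        rintro t ⟨htX, hty⟩
        rcases trichotomous_of (List.Lex (· < ·)) t x with htx | heq | hxt
        · exact Or.inl ⟨htX, htx⟩
        · subst heq
          refine Or.inr ⟨⟨htX, List.prefix_refl t⟩, ?_⟩
          rintro rfl; exact not_lex_of_prefix (List.prefix_refl t) hty
        · by_cases hxp : x <+: t
          · refine Or.inr ⟨⟨htX, hxp⟩, ?_⟩
            rintro rfl; exact not_lex_of_prefix (List.prefix_refl t) hty
          · exact absurd hty (asymm_of (List.Lex (· < ·))
              (lex_of_prefix_of_lex hxt hxp hp))
      have key : prrank X y ≤ prrank X x + ({t ∈ X | x <+: t} \ {y}).ncard :=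
        le_trans (Set.ncard_le_ncard hsub ((hA x).union hB.diff))
          (Set.ncard_union_le _ _)
      have hyB : y ∈ {t ∈ X | x <+: t} := ⟨hy, hp⟩
      have hdiff : ({t ∈ X | x <+: t} \ {y}).ncard = prcount X x - 1 := by
        rw [prcount, ← Set.ncard_diff_singleton_of_mem hyB]
      omega
end

section
/- For any finite set X of strings and any two strings x, y in X, the suffix-lexicographic rank of y among X lies in [surank_X(x), surank_X(x) + sucount_X(x) - 1] if and only if x is a suffix of y. -/
/-- Number of elements of `X` strictly preceding `x` in suffix-lexicographic order
(lexicographic order on the reversed strings). -/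
noncomputable def surank {α : Type*} [LinearOrder α] (X : Set (List α)) (x : List α) : ℕ :=
  {t ∈ X | List.Lex (· < ·) t.reverse x.reverse}.ncard

/-- Number of elements of `X` having `x` as a suffix. -/
noncomputable def sucount {α : Type*} [LinearOrder α] (X : Set (List α)) (x : List α) : ℕ :=
  {t ∈ X | x <:+ t}.ncard

section Aux
variable {α : Type*} [LinearOrder α]

private lemma lex_trans' {u v w : List α} (h1 : List.Lex (· < ·) u v)
    (h2 : List.Lex (· < ·) v w) : List.Lex (· < ·) u w :=
  List.lex_trans (fun h h' => lt_trans h h') h1 h2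

private lemma lex_of_prefix_ne : ∀ {p v : List α}, p <+: v → p ≠ v → List.Lex (· < ·) p v
  | [], [], _, hne => absurd rfl hne
  | [], _ :: _, _, _ => List.Lex.nil
  | a :: p', v, hp, hne => by
    obtain ⟨t, ht⟩ := hp
    cases v with
    | nil => simp at ht
    | cons b v' =>
      obtain ⟨rfl, ht'⟩ : a = b ∧ p' ++ t = v' := by
        constructor <;> [exact (List.cons.injEq _ _ _ _ ▸ ht).1;
          exact (List.cons.injEq _ _ _ _ ▸ ht).2]
      exact List.Lex.cons (lex_of_prefix_ne ⟨t, ht'⟩ (fun h => hne (by rw [h])))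

/-- prefix lies at or below any extension in lex order (≤ form). -/
private lemma lex_of_lex_of_prefix : ∀ {p v u : List α}, p <+: v →
    List.Lex (· < ·) v u → List.Lex (· < ·) p u ∨ p <+: u
  | [], _, _, _, _ => Or.inr (List.nil_prefix)
  | a :: p', v, u, hp, hvu => by
    obtain ⟨t, rfl⟩ := hp
    cases hvu with
    | rel h => exact Or.inl (List.Lex.rel h)
    | cons h =>
      rcases lex_of_lex_of_prefix ⟨t, rfl⟩ h with h' | h'
      · exact Or.inl (List.Lex.cons h')
      · obtain ⟨s, rfl⟩ := h'
        exact Or.inr ⟨s, rfl⟩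

/-- if p is a prefix of t, p < u in lex, and p is not a prefix of u, then t < u. -/
private lemma lex_of_prefix_lex : ∀ {p t u : List α}, p <+: t →
    List.Lex (· < ·) p u → ¬ p <+: u → List.Lex (· < ·) t u
  | [], _, _, _, _, hnp => absurd (List.nil_prefix) hnp
  | a :: p', t, u, hp, hpu, hnp => by
    obtain ⟨s, rfl⟩ := hp
    cases hpu with
    | rel h => exact List.Lex.rel h
    | cons h =>
      refine List.Lex.cons (lex_of_prefix_lex ⟨s, rfl⟩ h (fun hc => hnp ?_))
      obtain ⟨w, rfl⟩ := hc
      exact ⟨w, rfl⟩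
private lemma lex_trichotomy (u v : List α) :
    List.Lex (· < ·) u v ∨ u = v ∨ List.Lex (· < ·) v u := trichotomous u v

end Aux

theorem suffix_rank_interval {α : Type*} [LinearOrder α] (X : Set (List α)) (hX : X.Finite)
    (x y : List α) (hx : x ∈ X) (hy : y ∈ X) :
    (surank X x ≤ surank X y ∧ surank X y ≤ surank X x + sucount X x - 1) ↔ x <:+ y := by
  set L : List α → Set (List α) := fun z => {t ∈ X | List.Lex (· < ·) t.reverse z.reverse}
    with hL
  set P : Set (List α) := {t ∈ X | x <:+ t} with hP
  have hLsub : ∀ z, L z ⊆ X := fun z t ht => ht.1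
  have hPsub : P ⊆ X := fun t ht => ht.1
  have hLfin : ∀ z, (L z).Finite := fun z => hX.subset (hLsub z)
  have hPfin : P.Finite := hX.subset hPsub
  have hdisj : Disjoint (L x) P := by
    rw [Set.disjoint_left]
    rintro t ⟨-, hlt⟩ ⟨-, hsuf⟩
    have hpre : x.reverse <+: t.reverse := List.reverse_prefix.mpr hsuf
    rcases eq_or_ne x.reverse t.reverse with h | h
    · exact irrefl_of (List.Lex (· < ·)) _ (h ▸ hlt)
    · exact asymm_of (List.Lex (· < ·)) hlt (lex_of_prefix_ne hpre h)
  have hcardLP : (L x ∪ P).ncard = surank X x + sucount X x :=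
    Set.ncard_union_eq hdisj (hLfin x) hPfin
  constructor
  · rintro ⟨h1, h2⟩
    by_contra hns
    have hnp : ¬ x.reverse <+: y.reverse := fun h => hns (List.reverse_prefix.mp h)
    rcases lex_trichotomy x.reverse y.reverse with hlt | heq | hgt
    · -- x < y lex, not prefix: contradiction with h2
      have hsub : L x ∪ P ⊆ L y := by
        rintro t (⟨htX, ht⟩ | ⟨htX, ht⟩)
        · exact ⟨htX, lex_trans' ht hlt⟩
        · exact ⟨htX, lex_of_prefix_lex (List.reverse_prefix.mpr ht) hlt hnp⟩
      have hle : surank X x + sucount X x ≤ surank X y := by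
        rw [← hcardLP]
        exact Set.ncard_le_ncard hsub (hLfin y)
      have hx1 : 1 ≤ sucount X x := (Set.ncard_pos hPfin).mpr ⟨x, hx, List.suffix_refl x⟩
      omega
    · exact hns (by rw [List.reverse_injective heq])
    · -- y < x lex: contradiction with h1
      have hsub : insert y (L y) ⊆ L x := by
        rintro t (rfl | ⟨htX, ht⟩)
        · exact ⟨hy, hgt⟩
        · exact ⟨htX, lex_trans' ht hgt⟩
      have hyn : y ∉ L y := fun ⟨_, h⟩ => irrefl_of (List.Lex (· < ·)) _ h
      have : surank X y + 1 ≤ surank X x := by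
        have := Set.ncard_le_ncard hsub (hLfin x)
        rwa [Set.ncard_insert_of_notMem hyn (hLfin y)] at this
      omega
  · intro hs
    have hpre : x.reverse <+: y.reverse := List.reverse_prefix.mpr hs
    constructor
    · apply Set.ncard_le_ncard _ (hLfin y)
      rintro t ⟨htX, ht⟩
      rcases eq_or_ne x.reverse y.reverse with h | h
      · exact ⟨htX, h ▸ ht⟩
      · exact ⟨htX, lex_trans' ht (lex_of_prefix_ne hpre h)⟩
    · have hyP : y ∈ L x ∪ P := Or.inr ⟨hy, hs⟩
      have hsub : L y ⊆ (L x ∪ P) \ {y} := by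
        rintro t ⟨htX, ht⟩
        have htny : t ≠ y := by
          rintro rfl; exact irrefl_of (List.Lex (· < ·)) _ ht
        refine ⟨?_, by simpa using htny⟩
        rcases lex_trichotomy t.reverse x.reverse with hlt | heq | hgt
        · exact Or.inl ⟨htX, hlt⟩
        · exact Or.inr ⟨htX, by rw [List.reverse_injective heq]⟩
        · by_cases hpt : x.reverse <+: t.reverse
          · exact Or.inr ⟨htX, List.reverse_prefix.mp hpt⟩
          · exact absurd (lex_of_prefix_lex hpre hgt hpt) (asymm_of (List.Lex (· < ·)) ht)
      have := Set.ncard_le_ncard hsub (((hLfin x).union hPfin).diff)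
      rw [Set.ncard_diff_singleton_of_mem hyP, hcardLP] at this
      exact this
end

section
/- If a string q occurs exactly i times as a substring of a string W, and a string p contains exactly i' occurrences of q as a substring with i' ≥ 1, then p occurs at most i - i' + 1 times as a substring of W. -/
open scoped Pointwise

/-- The set of occurrence (starting) positions of `s` in `t`. -/
def occs {α : Type*} [DecidableEq α] (s t : List α) : Finset ℕ :=
  (Finset.range (t.length + 1)).filter (fun j => s <+: t.drop j)

theorem occ_count_bound {α : Type*} [DecidableEq α] (q p W : List α) (i i' : ℕ)
    (hW : (occs q W).card = i) (hp : (occs q p).card = i') (hi' : 1 ≤ i') :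
    (occs p W).card ≤ i - i' + 1 := by
  classical
  set S := occs p W with hS
  set T := occs q p with hT
  rcases S.eq_empty_or_nonempty with h | hSne
  · simp [h]
  have hTne : T.Nonempty := Finset.card_pos.mp (by omega)
  -- S + T ⊆ occs q W
  have hsub : S + T ⊆ occs q W := by
    intro x hx
    rw [Finset.mem_add] at hx
    obtain ⟨j, hj, k, hk, rfl⟩ := hx
    simp only [hS, hT, occs, Finset.mem_filter, Finset.mem_range] at hj hk ⊢
    obtain ⟨hj1, hj2⟩ := hj
    obtain ⟨hk1, hk2⟩ := hk
    have hkp : k ≤ p.length := by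
      have := hk2.length_le
      have := (List.length_drop (i := k) (l := p)) ▸ this
      omega
    have hpW : p.length ≤ (W.drop j).length := hj2.length_le
    rw [List.length_drop] at hpW
    constructor
    · omega
    · have h1 : q <+: (W.drop j).drop k := hk2.trans (hj2.drop k)
      rwa [List.drop_drop] at h1
  have hcd : S.card + T.card - 1 ≤ (S + T).card :=
    cauchy_davenport_add_of_linearOrder_isCancelAdd hSne hTne
  have hle : (S + T).card ≤ i := hW ▸ Finset.card_le_card hsub
  have hSc : 1 ≤ S.card := Finset.card_pos.mpr hSne
  omega
end

section
/- Let p be a string of length m and let h = ⌊m/3⌋. If a factor q of p of length m - h occurs at least twice in p, then the shortest period of q is at most |q|/2. -/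
/-- `g` is a period of the string `q`. -/
def isPeriod {α : Type*} (q : List α) (g : ℕ) : Prop :=
  0 < g ∧ g ≤ q.length ∧ ∀ a, a + g < q.length → q[a]? = q[a + g]?

lemma prefix_getElem? {α : Type*} {q t : List α} (h : q <+: t) {a : ℕ}
    (ha : a < q.length) : q[a]? = t[a]? := by
  obtain ⟨r, rfl⟩ := h
  rw [List.getElem?_append, if_pos ha]

lemma key {α : Type*} [DecidableEq α] {p q : List α} {i j : ℕ}
    (hi : i ∈ occs q p) (hj : j ∈ occs q p) (hij : i < j)
    (hle : p.length - q.length ≤ q.length) : isPeriod q (j - i) := by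
  simp only [occs, Finset.mem_filter, Finset.mem_range] at hi hj
  obtain ⟨hi1, hi2⟩ := hi
  obtain ⟨hj1, hj2⟩ := hj
  have hqi : q.length ≤ (p.drop i).length := hi2.length_le
  have hqj : q.length ≤ (p.drop j).length := hj2.length_le
  simp only [List.length_drop] at hqi hqj
  refine ⟨by omega, by omega, fun a ha => ?_⟩
  have h1 : q[a + (j - i)]? = (p.drop i)[a + (j - i)]? := prefix_getElem? hi2 ha
  have h2 : q[a]? = (p.drop j)[a]? := prefix_getElem? hj2 (by omega)
  rw [h1, h2, List.getElem?_drop, List.getElem?_drop]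
  congr 1
  omega

theorem shortest_period_of_repeated_factor {α : Type*} [DecidableEq α]
    (p q : List α) (m : ℕ) (hm : p.length = m) (hq : q <:+: p)
    (hql : q.length = m - m / 3) (hocc : 2 ≤ (occs q p).card) :
    sInf {g | isPeriod q g} ≤ q.length / 2 := by
  obtain ⟨i, hi, j, hj, hij⟩ := Finset.one_lt_card.mp hocc
  -- q is nonempty
  have hm1 : 1 ≤ m := by
    by_contra h
    have hm0 : m = 0 := by omega
    have : p = [] := by
      have := hm; rw [hm0] at this; exact List.length_eq_zero_iff.mp this
    rw [this] at hi hj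
    simp only [occs, List.length_nil, Finset.mem_filter, Finset.mem_range] at hi hj
    omega
  have hle : p.length - q.length ≤ q.length := by rw [hm, hql]; omega
  have hbound : ∀ k ∈ occs q p, k + q.length ≤ p.length := by
    intro k hk
    simp only [occs, Finset.mem_filter, Finset.mem_range] at hk
    have := hk.2.length_le
    simp only [List.length_drop] at this
    omega
  rcases hij.lt_or_gt with h | h
  · have hper := key hi hj h hle
    have hj' := hbound j hj
    calc sInf {g | isPeriod q g} ≤ j - i := Nat.sInf_le hper
      _ ≤ q.length / 2 := by rw [hm, hql] at *; omega
  · have hper := key hj hi h hle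
    have hi' := hbound i hi
    calc sInf {g | isPeriod q g} ≤ i - j := Nat.sInf_le hper
      _ ≤ q.length / 2 := by rw [hm, hql] at *; omega
end

section
/- If a string q has a period g with g ≤ |q|/2, and g₀ is the shortest period of q, then every period g' of q with g' ≤ |q|/2 is a multiple of g₀. -/
lemma period_sub {α : Type*} (q : List α) (p r : ℕ) (hp : isPeriod q p) (hr : isPeriod q r)
    (hrp : r < p) (hsum : p + r ≤ q.length) : isPeriod q (p - r) := by
  obtain ⟨hp0, hpn, hpe⟩ := hp
  obtain ⟨hr0, hrn, hre⟩ := hr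
  refine ⟨by omega, by omega, ?_⟩
  intro a ha
  by_cases h : a + p < q.length
  · have h1 := hpe a h
    have h2 := hre (a + p - r) (by omega)
    rw [h1, show a + (p - r) = a + p - r from by omega, h2]; congr 1; omega
  · have h1 := hre (a - r) (by omega)
    have h2 := hpe (a - r) (by omega)
    have e1 : a - r + r = a := by omega
    have e2 : a - r + p = a + (p - r) := by omega
    rw [e1] at h1
    rw [e2] at h2
    rw [← h1, h2]

lemma period_gcd {α : Type*} (q : List α) : ∀ n p r, p + r ≤ n → isPeriod q p → isPeriod q r →
    p + r ≤ q.length → isPeriod q (Nat.gcd p r) := by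
  intro n
  induction n with
  | zero => intro p r h hp _ _; exact absurd hp.1 (by omega)
  | succ n ih =>
    intro p r hn hp hr hsum
    rcases lt_trichotomy p r with h | h | h
    · have hsub := period_sub q r p hr hp h (by omega)
      have hg : isPeriod q (Nat.gcd (r - p) p) :=
        ih (r - p) p (by have := hp.1; omega) hsub hp (by omega)
      rwa [Nat.gcd_sub_self_left h.le, Nat.gcd_comm] at hg
    · subst h
      rwa [Nat.gcd_self]
    · have hsub := period_sub q p r hp hr h (by omega)
      have hg : isPeriod q (Nat.gcd (p - r) r) :=
        ih (p - r) r (by have := hr.1; omega) hsub hr (by omega)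
      rwa [Nat.gcd_sub_self_left h.le] at hg

theorem small_periods_multiple_of_shortest {α : Type*} (q : List α) (g g₀ : ℕ)
    (hg : isPeriod q g) (hg2 : 2 * g ≤ q.length)
    (hg₀ : isPeriod q g₀) (hmin : ∀ g', isPeriod q g' → g₀ ≤ g') :
    ∀ g', isPeriod q g' → 2 * g' ≤ q.length → g₀ ∣ g' := by
  intro g' hg' hg'2
  have h0 := hmin g' hg'
  have hgcd : isPeriod q (Nat.gcd g₀ g') :=
    period_gcd q (g₀ + g') g₀ g' le_rfl hg₀ hg' (by omega)
  have h1 := hmin _ hgcd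
  have hle : Nat.gcd g₀ g' ≤ g₀ := Nat.gcd_le_left _ hg₀.1
  have heq : Nat.gcd g₀ g' = g₀ := le_antisymm hle h1
  exact heq ▸ Nat.gcd_dvd_right g₀ g'
end

section
/- Let p be a string containing exactly c_p ≥ 1 occurrences of a string q, and let W be a string containing exactly c_W occurrences of q. If c_W < c_p then p does not occur in W; if c_W ≥ c_p then p occurs at most c_W - c_p + 1 times in W. -/
lemma mem_occs {α : Type*} [DecidableEq α] {s t : List α} {i : ℕ} :
    i ∈ occs s t ↔ i ≤ t.length ∧ s <+: t.drop i := by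
  simp [occs, Nat.lt_succ_iff]

lemma shift_mem {α : Type*} [DecidableEq α] {p q W : List α} {i j : ℕ}
    (hi : i ∈ occs p W) (hj : j ∈ occs q p) : i + j ∈ occs q W := by
  rw [mem_occs] at *
  obtain ⟨hi1, r, hr⟩ := hi
  obtain ⟨hj1, hj2⟩ := hj
  have hlen : W.length - i = p.length + r.length := by
    have := congrArg List.length hr
    simpa using this.symm
  have hdrop : W.drop (i + j) = p.drop j ++ r := by
    rw [← List.drop_drop, ← hr, List.drop_append_of_le_length hj1]
  refine ⟨by omega, ?_⟩
  rw [hdrop]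
  exact hj2.trans (List.prefix_append _ _)

theorem pattern_occurrence_count_bounds {α : Type*} [DecidableEq α]
    (p q W : List α) (cp cW : ℕ)
    (hp : (occs q p).card = cp) (hcp : 1 ≤ cp) (hW : (occs q W).card = cW) :
    (cW < cp → (occs p W).card = 0) ∧ (cp ≤ cW → (occs p W).card ≤ cW - cp + 1) := by
  have key : (occs p W).Nonempty → (occs p W).card + cp ≤ cW + 1 := by
    intro hne
    have hqp : (occs q p).Nonempty := Finset.card_pos.mp (by omega)
    set i0 := (occs p W).max' hne with hi0
    set j0 := (occs q p).min' hqp with hj0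
    set A := (occs p W).image (· + j0) with hA0
    set B := (occs q p).image (i0 + ·) with hB0
    have hA : A.card = (occs p W).card :=
      Finset.card_image_of_injective _ fun a b h => by simpa using h
    have hB : B.card = cp := by
      rw [← hp]
      exact Finset.card_image_of_injective _ fun a b h => by simpa using h
    have hsub : A ∪ B ⊆ occs q W := by
      intro x hx
      rcases Finset.mem_union.mp hx with hx | hx
      · obtain ⟨i, hi, rfl⟩ := Finset.mem_image.mp hx
        exact shift_mem hi ((occs q p).min'_mem hqp)
      · obtain ⟨j, hj, rfl⟩ := Finset.mem_image.mp hx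
        exact shift_mem ((occs p W).max'_mem hne) hj
    have hint : (A ∩ B).card ≤ 1 := by
      apply Finset.card_le_one.mpr
      have key2 : ∀ x ∈ A ∩ B, x = i0 + j0 := by
        intro x hx
        obtain ⟨hxA, hxB⟩ := Finset.mem_inter.mp hx
        obtain ⟨i, hi, rfl⟩ := Finset.mem_image.mp hxA
        obtain ⟨j, hj, hij⟩ := Finset.mem_image.mp hxB
        have h1 : i ≤ i0 := Finset.le_max' _ _ hi
        have h2 : j0 ≤ j := Finset.min'_le _ _ hj
        omega
      intro a ha b hb
      rw [key2 a ha, key2 b hb]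
    have hunion := Finset.card_union_add_card_inter A B
    have hle := Finset.card_le_card hsub
    rw [hW] at hle
    omega
  constructor
  · intro h
    by_contra hne
    have hpos : (occs p W).Nonempty := Finset.card_pos.mp (Nat.pos_of_ne_zero hne)
    have := key hpos
    omega
  · intro h
    rcases (occs p W).eq_empty_or_nonempty with he | hne
    · simp [he]
    · have := key hne; omega
end

section
/- Let W = q'·q·q'' where q = (uv)^t u has shortest period g = |uv| with t ≥ 2 and |v| ≥ 1. Let i' be the largest integer such that (uv)^{i'} is a suffix of q', and i'' the largest integer such that (vu)^{i''} is a prefix of q''. If an occurrence of q in W starts at position α with α < |q'| and |q'| - α ≤ |q|/2, then |q'| - α is a multiple of g and (uv)^{(|q'|-α)/g} is a suffix of q', hence (|q'| - α)/g ≤ i'. -/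
/-- `k` concatenated copies of `s`. -/
def pow {α : Type*} (s : List α) (k : ℕ) : List α :=
  (List.replicate k s).flatten

theorem pow_length {α : Type*} (s : List α) (k : ℕ) : (pow s k).length = k * s.length := by
  simp [pow, List.length_flatten, List.map_replicate, List.sum_replicate, smul_eq_mul]

theorem pow_add' {α : Type*} (s : List α) (m n : ℕ) : pow s (m + n) = pow s m ++ pow s n := by
  induction m with
  | zero => simp [pow]
  | succ m ih =>
    have h : m + 1 + n = (m + n) + 1 := by omega
    rw [h]
    simp only [pow, List.replicate_succ, List.flatten_cons] at ih ⊢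
    rw [ih, List.append_assoc]

theorem pow_suffix_pow {α : Type*} (s : List α) {m n : ℕ} (h : m ≤ n) :
    pow s m <:+ pow s n := by
  refine ⟨pow s (n - m), ?_⟩
  rw [← pow_add']
  congr 1
  omega

theorem period_sub_s14 {α : Type*} (w : List α) (p q : ℕ) (hpq : p ≤ q)
    (hsum : p + q ≤ w.length)
    (hp : ∀ a, a + p < w.length → w[a]? = w[a + p]?)
    (hq : ∀ a, a + q < w.length → w[a]? = w[a + q]?) :
    ∀ a, a + (q - p) < w.length → w[a]? = w[a + (q - p)]? := by
  intro b h
  by_cases hc : b + q < w.length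
  · have h1 := hq b hc
    have h2 := hp (b + (q - p)) (by omega)
    rw [h1, h2]
    congr 1
    omega
  · have hbp : p ≤ b := by omega
    have h1 := hp (b - p) (by omega)
    have h2 := hq (b - p) (by omega)
    have e1 : b - p + p = b := by omega
    have e2 : b - p + q = b + (q - p) := by omega
    rw [e1] at h1
    rw [e2] at h2
    rw [← h1, h2]

theorem period_gcd_s14 {α : Type*} (w : List α) (N : ℕ) : ∀ p q : ℕ, p + q ≤ N → 0 < p → 0 < q →
    p + q ≤ w.length →
    (∀ a, a + p < w.length → w[a]? = w[a + p]?) →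
    (∀ a, a + q < w.length → w[a]? = w[a + q]?) →
    ∀ a, a + Nat.gcd p q < w.length → w[a]? = w[a + Nat.gcd p q]? := by
  induction N with
  | zero => intro p q hN hp0 hq0; omega
  | succ N ih =>
    intro p q hN hp0 hq0 hsum hp hq
    rcases lt_trichotomy p q with h | h | h
    · have hsub := period_sub_s14 w p q h.le hsum hp hq
      have := ih p (q - p) (by omega) hp0 (by omega) (by omega) hp hsub
      rwa [Nat.gcd_sub_self_right h.le] at this
    · subst h
      simpa [Nat.gcd_self] using hp
    · have hsub := period_sub_s14 w q p h.le (by omega) hq hp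
      have := ih (p - q) q (by omega) (by omega) hq0 (by omega) hsub hq
      rwa [Nat.gcd_comm, Nat.gcd_sub_self_right h.le, Nat.gcd_comm] at this

theorem left_occurrence_in_run {α : Type*} (u v q' q'' W q : List α) (g t i' i'' a : ℕ)
    (hq : q = pow (u ++ v) t ++ u) (hg : g = (u ++ v).length)
    (ht : 2 ≤ t) (hv : v ≠ [])
    (hper : isPeriod q g) (hmin : ∀ g'', isPeriod q g'' → g ≤ g'')
    (hW : W = q' ++ q ++ q'')
    (hi' : pow (u ++ v) i' <:+ q') (hi'max : ¬ pow (u ++ v) (i' + 1) <:+ q')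
    (hi'' : pow (v ++ u) i'' <+: q'') (hi''max : ¬ pow (v ++ u) (i'' + 1) <+: q'')
    (hocc : q <+: W.drop a) (ha : a < q'.length)
    (hhalf : 2 * (q'.length - a) ≤ q.length) :
    g ∣ (q'.length - a) ∧ pow (u ++ v) ((q'.length - a) / g) <:+ q' ∧
      (q'.length - a) / g ≤ i' := by
  set d := q'.length - a with hd
  have hd0 : 0 < d := by omega
  have hg0 : 0 < g := hper.1
  have hv0 : 0 < v.length := List.length_pos_iff.mpr hv
  have hul : u.length < g := by
    rw [hg, List.length_append]; omega
  have hql : q.length = t * g + u.length := by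
    rw [hq, List.length_append, pow_length, hg]
  have h2g : 2 * g ≤ q.length := by
    have : 2 * g ≤ t * g := Nat.mul_le_mul_right g ht
    omega
  have hdq : d ≤ q.length := by omega
  -- decompose W.drop a
  have hWd : W.drop a = q'.drop a ++ (q ++ q'') := by
    rw [hW, List.append_assoc, List.drop_append_of_le_length ha.le]
  have hlen_drop : (q'.drop a).length = d := by
    rw [List.length_drop]
  -- q.take d = q'.drop a
  have hqeq : q = (W.drop a).take q.length := List.prefix_iff_eq_take.mp hocc
  have htake : q.take d = q'.drop a := by
    conv_lhs => rw [hqeq]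
    rw [List.take_take, min_eq_left hdq, hWd, List.take_left' hlen_drop]
  -- d is a period of q
  have h3 : q.drop d <+: q ++ q'' := by
    have h2 : q.take d ++ q.drop d <+: W.drop a := by
      rw [List.take_append_drop]; exact hocc
    rw [htake, hWd] at h2
    exact (List.prefix_append_right_inj _).mp h2
  have hdrop : q.drop d = q.take (q.length - d) := by
    have := List.prefix_iff_eq_take.mp h3
    rwa [List.length_drop, List.take_append_of_le_length (by omega)] at this
  have hperd : ∀ b, b + d < q.length → q[b]? = q[b + d]? := by
    intro b hb
    have h4 : (q.drop d)[b]? = (q.take (q.length - d))[b]? := by rw [hdrop]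
    rw [List.getElem?_drop, List.getElem?_take_of_lt (by omega)] at h4
    rw [← h4]
    congr 1
    omega
  -- gcd argument
  have hgcd := period_gcd_s14 q (g + d) g d le_rfl hg0 hd0 (by omega) hper.2.2 hperd
  have hgcdper : isPeriod q (Nat.gcd g d) := by
    refine ⟨Nat.gcd_pos_of_pos_left d hg0, le_trans (Nat.gcd_le_left d hg0) hper.2.1, hgcd⟩
  have hgcdeq : Nat.gcd g d = g :=
    le_antisymm (Nat.gcd_le_left d hg0) (hmin _ hgcdper)
  have hgdvd : g ∣ d := hgcdeq ▸ Nat.gcd_dvd_right g d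
  set k := d / g with hk
  have hkd : k * g = d := Nat.div_mul_cancel hgdvd
  have hkt : k ≤ t := by
    have h1 : 2 * k * g < (t + 1) * g := by
      have : 2 * (k * g) ≤ t * g + u.length := by rw [hkd]; omega
      nlinarith
    have := Nat.lt_of_mul_lt_mul_right h1
    omega
  have hpowtake : q.take d = pow (u ++ v) k := by
    rw [hq]
    have hsplit : pow (u ++ v) t = pow (u ++ v) k ++ pow (u ++ v) (t - k) := by
      rw [← pow_add']; congr 1; omega
    rw [hsplit, List.append_assoc,
      List.take_left' (by rw [pow_length, ← hg, hkd])]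
  have hsuf : pow (u ++ v) k <:+ q' := by
    rw [← hpowtake, htake]
    exact List.drop_suffix a q'
  refine ⟨hgdvd, hsuf, ?_⟩
  by_contra hcon
  push_neg at hcon
  exact hi'max ((pow_suffix_pow (u ++ v) hcon).trans hsuf)
end
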